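/- Let n ≥ 3, ψ a permutation-symmetric state of n qudits, and X a matrix with X_{(1)}ψ ∈ S. Then for every natural number p, X^p_{(1)}ψ ∈ S; and if X is invertible, this holds for all integers p. -/

import Mathlib

open Matrix BigOperators Polynomial

/-- Permutation symmetry of an `n`-qudit state represented by its amplitudes. -/
def PSym {n d : ℕ} (ψ : (Fin n → Fin d) → ℂ) : Prop :=
  ∀ σ : Equiv.Perm (Fin n), ∀ x : Fin n → Fin d, ψ (x ∘ σ) = ψ x

/-- The operator `B` acting on the `k`-th tensor factor (identity elsewhere). -/
noncomputable def appAt {n d : ℕ} (k : Fin n) (B : Matrix (Fin d) (Fin d) ℂ)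
    (ψ : (Fin n → Fin d) → ℂ) : (Fin n → Fin d) → ℂ :=
  fun x => ∑ j : Fin d, B (x k) j * ψ (Function.update x k j)

/-- The operator `A 1 ⊗ A 2 ⊗ ⋯ ⊗ A n` acting on an `n`-qudit state. -/
noncomputable def appAll {n d : ℕ} (A : Fin n → Matrix (Fin d) (Fin d) ℂ)
    (ψ : (Fin n → Fin d) → ℂ) : (Fin n → Fin d) → ℂ :=
  fun x => ∑ y : Fin n → Fin d, (∏ k, A k (x k) (y k)) * ψ y

lemma appAt_comp_perm {n d : ℕ} {ψ : (Fin n → Fin d) → ℂ} (hψ : PSym ψ)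
    (B : Matrix (Fin d) (Fin d) ℂ) (k : Fin n) (σ : Equiv.Perm (Fin n)) (x : Fin n → Fin d) :
    appAt k B ψ (x ∘ σ) = appAt (σ k) B ψ x := by
  unfold appAt
  refine Finset.sum_congr rfl fun j _ => ?_
  have h : Function.update (x ∘ ⇑σ) k j = Function.update x (σ k) j ∘ ⇑σ := by
    rw [Function.update_comp_equiv x σ (σ k) j, Equiv.symm_apply_apply]
  rw [h, hψ σ, Function.comp_apply]

lemma appAt_one {n d : ℕ} (ψ : (Fin n → Fin d) → ℂ) (k : Fin n) : appAt k 1 ψ = ψ := by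
  funext x
  simp [appAt, Matrix.one_apply]

lemma appAt_mul {n d : ℕ} (ψ : (Fin n → Fin d) → ℂ) (k : Fin n)
    (A B : Matrix (Fin d) (Fin d) ℂ) : appAt k (A * B) ψ = appAt k A (appAt k B ψ) := by
  funext x
  simp only [appAt, Function.update_self, Function.update_idem, Matrix.mul_apply,
    Finset.sum_mul, Finset.mul_sum, mul_assoc]
  rw [Finset.sum_comm]

lemma appAt_comm {n d : ℕ} (ψ : (Fin n → Fin d) → ℂ) {k l : Fin n} (h : k ≠ l)
    (A B : Matrix (Fin d) (Fin d) ℂ) :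
    appAt k A (appAt l B ψ) = appAt l B (appAt k A ψ) := by
  funext x
  simp only [appAt, Function.update_of_ne h.symm, Function.update_of_ne h,
    Finset.mul_sum]
  rw [Finset.sum_comm]
  refine Finset.sum_congr rfl fun j _ => Finset.sum_congr rfl fun i _ => ?_
  rw [Function.update_comm h]
  ring

lemma key {n d : ℕ} {ψ : (Fin n → Fin d) → ℂ} (hn : 3 ≤ n) (hψ : PSym ψ)
    (B : Matrix (Fin d) (Fin d) ℂ)
    (hB : ∀ k, appAt k B ψ = appAt ⟨0, lt_of_lt_of_le (by norm_num) hn⟩ B ψ) :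
    ∀ p : ℕ, ∀ k, appAt k (B ^ p) ψ = appAt ⟨0, lt_of_lt_of_le (by norm_num) hn⟩ (B ^ p) ψ := by
  set i0 : Fin n := ⟨0, lt_of_lt_of_le (by norm_num) hn⟩
  intro p
  induction p with
  | zero => intro k; simp [appAt_one]
  | succ p ih =>
    intro k
    by_cases hk : k = i0
    · rw [hk]
    · set m : Fin n := if k = ⟨1, by omega⟩ then ⟨2, by omega⟩ else ⟨1, by omega⟩ with hm
      have hmk : m ≠ k := by
        by_cases h1 : k = ⟨1, by omega⟩
        · simp only [hm, h1, if_pos rfl]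
          intro h; exact absurd (congrArg Fin.val h) (by simp)
        · simp only [hm, if_neg h1]
          intro h; exact h1 h.symm
      have hmi0 : m ≠ i0 := by
        by_cases h1 : k = ⟨1, by omega⟩ <;>
          [simp only [hm, if_pos h1]; simp only [hm, if_neg h1]] <;>
          (intro h; exact absurd (congrArg Fin.val h) (by simp [i0]))
      calc appAt k (B ^ (p + 1)) ψ
          = appAt k (B ^ p) (appAt k B ψ) := by rw [pow_succ, appAt_mul]
        _ = appAt k (B ^ p) (appAt m B ψ) := by rw [hB k, hB m]
        _ = appAt m B (appAt k (B ^ p) ψ) := appAt_comm ψ hmk.symm _ _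
        _ = appAt m B (appAt i0 (B ^ p) ψ) := by rw [ih k, ih i0]
        _ = appAt i0 (B ^ p) (appAt m B ψ) := (appAt_comm ψ hmi0 _ _)
        _ = appAt i0 (B ^ p) (appAt i0 B ψ) := by rw [hB m]
        _ = appAt i0 (B ^ (p + 1)) ψ := by rw [pow_succ, appAt_mul]

lemma psym_of_all_eq {n d : ℕ} {ψ : (Fin n → Fin d) → ℂ} (hn : 3 ≤ n) (hψ : PSym ψ)
    (B : Matrix (Fin d) (Fin d) ℂ)
    (hB : ∀ k, appAt k B ψ = appAt ⟨0, lt_of_lt_of_le (by norm_num) hn⟩ B ψ) :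
    PSym (appAt ⟨0, lt_of_lt_of_le (by norm_num) hn⟩ B ψ) := by
  intro σ x
  rw [appAt_comp_perm hψ, hB (σ ⟨0, lt_of_lt_of_le (by norm_num) hn⟩)]

theorem stmt_3 {n d : ℕ} (hn : 3 ≤ n) (ψ : (Fin n → Fin d) → ℂ) (hψ : PSym ψ)
    (X : Matrix (Fin d) (Fin d) ℂ)
    (hX : PSym (appAt ⟨0, by omega⟩ X ψ)) :
    (∀ p : ℕ, PSym (appAt ⟨0, by omega⟩ (X ^ p) ψ)) ∧
      (IsUnit X.det → ∀ p : ℤ, PSym (appAt ⟨0, by omega⟩ (X ^ p) ψ)) := by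
  set i0 : Fin n := ⟨0, by omega⟩
  have hBX : ∀ k, appAt k X ψ = appAt i0 X ψ := by
    intro k
    funext x
    have h1 := appAt_comp_perm hψ X i0 (Equiv.swap i0 k) x
    rw [hX (Equiv.swap i0 k) x, Equiv.swap_apply_left] at h1
    exact h1.symm
  have hnat : ∀ p : ℕ, PSym (appAt i0 (X ^ p) ψ) := fun p =>
    psym_of_all_eq hn hψ _ (key hn hψ X hBX p)
  refine ⟨hnat, fun hdet p => ?_⟩
  have hBXinv : ∀ k, appAt k X⁻¹ ψ = appAt i0 X⁻¹ ψ := by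
    intro k
    by_cases hk : k = i0
    · rw [hk]
    have hid : ∀ l, appAt l X⁻¹ (appAt l X ψ) = ψ := fun l => by
      rw [← appAt_mul, Matrix.nonsing_inv_mul X hdet, appAt_one]
    calc appAt k X⁻¹ ψ
        = appAt k X⁻¹ (appAt i0 X⁻¹ (appAt i0 X ψ)) := by rw [hid i0]
      _ = appAt i0 X⁻¹ (appAt k X⁻¹ (appAt i0 X ψ)) := (appAt_comm _ hk _ _)
      _ = appAt i0 X⁻¹ (appAt k X⁻¹ (appAt k X ψ)) := by rw [hBX k]
      _ = appAt i0 X⁻¹ ψ := by rw [hid k]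
  obtain ⟨m, rfl | rfl⟩ := Int.eq_nat_or_neg p
  · rw [zpow_natCast]; exact hnat m
  · rw [Matrix.zpow_neg_natCast, ← Matrix.inv_pow']
    exact psym_of_all_eq hn hψ _ (key hn hψ X⁻¹ hBXinv m)
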